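/- Let H be a complex Hilbert space and A ∈ B(H) self-adjoint with A² − A ≥ 0. Set L = (A² − A)^{1/2} and |A − 1| = ((A − 1)²)^{1/2} (positive square roots), and define Ω on the Hilbert space direct sum H ⊕₂ H by Ω(x, y) = ((1 − A)x + Ly, −Lx + (A − 1)y). Then ‖Ω‖ = ‖ |A − 1| + L ‖ and ‖Ω²‖ = ‖A − 1‖. -/

import Mathlib

noncomputable section

variable {H : Type*} [NormedAddCommGroup H] [InnerProductSpace ℂ H] [CompleteSpace H]

private lemma norm_e_sq (a b : H) :
    ‖(WithLp.equiv 2 (H × H)).symm (a, b)‖ ^ 2 = ‖a‖ ^ 2 + ‖b‖ ^ 2 := by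
  rw [WithLp.prod_norm_sq_eq_of_L2]
  rfl

set_option maxHeartbeats 1000000 in
/-- Let `A` be self-adjoint with `A² - A ≥ 0`, `L = (A² - A)^{1/2}` and
`|A - 1| = ((A - 1)²)^{1/2}`, and let `Ω` act on `H ⊕₂ H` by
`Ω(x, y) = ((1 - A)x + Ly, -Lx + (A - 1)y)`.  Then `‖Ω‖ = ‖|A - 1| + L‖` and
`‖Ω²‖ = ‖A - 1‖`. -/
theorem norm_Omega_eq (A : H →L[ℂ] H) (hA : IsSelfAdjoint A) (hpos : 0 ≤ A * A - A)
    (Ω : WithLp 2 (H × H) →L[ℂ] WithLp 2 (H × H))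
    (hΩ : ∀ x y : H, Ω ((WithLp.equiv 2 (H × H)).symm (x, y)) =
      (WithLp.equiv 2 (H × H)).symm
        ((1 - A) x + CFC.sqrt (A * A - A) y, -(CFC.sqrt (A * A - A) x) + (A - 1) y)) :
    ‖Ω‖ = ‖CFC.sqrt ((A - 1) * (A - 1)) + CFC.sqrt (A * A - A)‖ ∧
    ‖Ω * Ω‖ = ‖A - 1‖ := by
  set e := (WithLp.equiv 2 (H × H)).symm with he
  set L := CFC.sqrt (A * A - A) with hLdef
  set M := CFC.sqrt ((A - 1) * (A - 1)) with hMdef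
  set fL : ℝ → ℝ := fun t => Real.sqrt (t ^ 2 - t) with hfL
  have hcontL : ContinuousOn fL (spectrum ℝ A) :=
    (Real.continuous_sqrt.comp (by continuity)).continuousOn
  -- `A * A - A` as a cfc
  have hA2 : cfc (fun t : ℝ => t ^ 2 - t) A = A * A - A := by
    rw [cfc_sub (fun t : ℝ => t ^ 2) (fun t : ℝ => t) A (by fun_prop) (by fun_prop),
      cfc_pow_id A 2, cfc_id' ℝ A, sq]
  -- the spectrum of `A` consists of points with `t² - t ≥ 0`
  have hspec : ∀ t ∈ spectrum ℝ A, 0 ≤ t ^ 2 - t := by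
    have := (cfc_nonneg_iff (fun t : ℝ => t ^ 2 - t) A (by fun_prop) hA).mp (hA2 ▸ hpos)
    exact this
  -- `L` as a cfc of `A`
  have hLsq : cfc fL A * cfc fL A = A * A - A :=
    calc cfc fL A * cfc fL A
        = cfc (fun t : ℝ => fL t * fL t) A := (cfc_mul fL fL A hcontL hcontL).symm
      _ = cfc (fun t : ℝ => t ^ 2 - t) A :=
          cfc_congr fun t ht => Real.mul_self_sqrt (hspec t ht)
      _ = A * A - A := hA2
  have hL : L = cfc fL A := by
    rw [hLdef]
    exact CFC.sqrt_unique hLsq (cfc_nonneg fun t _ => Real.sqrt_nonneg _)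
  -- `A - 1` as a cfc of `A`
  have hB : (A - 1 : H →L[ℂ] H) = cfc (fun t : ℝ => t - 1) A := by
    rw [cfc_sub (fun t : ℝ => t) (fun _ : ℝ => 1) A (by fun_prop) (by fun_prop),
      cfc_id' ℝ A, cfc_const_one ℝ A]
  -- `M` as a cfc of `A`
  have hMsq : cfc (fun t : ℝ => |t - 1|) A * cfc (fun t : ℝ => |t - 1|) A
      = (A - 1) * (A - 1) :=
    calc cfc (fun t : ℝ => |t - 1|) A * cfc (fun t : ℝ => |t - 1|) A
          = cfc (fun t : ℝ => |t - 1| * |t - 1|) A :=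
            (cfc_mul _ _ A (by fun_prop) (by fun_prop)).symm
        _ = cfc (fun t : ℝ => (t - 1) * (t - 1)) A :=
            cfc_congr fun t _ => abs_mul_abs_self _
        _ = cfc (fun t : ℝ => t - 1) A * cfc (fun t : ℝ => t - 1) A :=
            cfc_mul _ _ A (by fun_prop) (by fun_prop)
        _ = (A - 1) * (A - 1) := by rw [← hB]
  have hM : M = cfc (fun t : ℝ => |t - 1|) A := by
    rw [hMdef]
    exact CFC.sqrt_unique hMsq (cfc_nonneg fun t _ => abs_nonneg _)
  -- the two key operators
  set P := A - 1 + L with hPdef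
  set Q := L - (A - 1) with hQdef
  have hP : P = cfc (fun t : ℝ => (t - 1) + fL t) A := by
    rw [hPdef, hB, hL, ← cfc_add A _ _ (by fun_prop) hcontL]
  have hQ : Q = cfc (fun t : ℝ => fL t - (t - 1)) A := by
    rw [hQdef, hB, hL, ← cfc_sub fL (fun t : ℝ => t - 1) A hcontL (by fun_prop)]
  have hML : M + L = cfc (fun t : ℝ => |t - 1| + fL t) A := by
    rw [hM, hL, ← cfc_add A _ _ (by fun_prop) hcontL]
  have hcont1 : ContinuousOn (fun t : ℝ => (t - 1) + fL t) (spectrum ℝ A) :=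
    ((continuous_id.sub continuous_const).continuousOn).add hcontL
  have hcont2 : ContinuousOn (fun t : ℝ => fL t - (t - 1)) (spectrum ℝ A) :=
    hcontL.sub ((continuous_id.sub continuous_const).continuousOn)
  have hcont3 : ContinuousOn (fun t : ℝ => |t - 1| + fL t) (spectrum ℝ A) :=
    (((continuous_id.sub continuous_const).abs).continuousOn).add hcontL
  -- `‖M + L‖ = max ‖P‖ ‖Q‖`
  have hnorm_eq : ‖M + L‖ = max ‖P‖ ‖Q‖ := by
    refine le_antisymm ?_ (max_le ?_ ?_)
    · rw [hML]
      refine norm_cfc_le (le_trans (norm_nonneg P) (le_max_left _ _)) fun t ht => ?_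
      have h0 : 0 ≤ fL t := Real.sqrt_nonneg _
      rcases le_total 1 t with h | h
      · refine le_trans ?_ (le_max_left ‖P‖ ‖Q‖)
        have : |t - 1| + fL t = (t - 1) + fL t := by
          rw [abs_of_nonneg (by linarith)]
        rw [Real.norm_eq_abs, this,
          abs_of_nonneg (add_nonneg (by linarith) h0)]
        calc (t - 1) + fL t ≤ ‖(t - 1) + fL t‖ := le_abs_self _
          _ ≤ ‖cfc (fun t : ℝ => (t - 1) + fL t) A‖ :=
              norm_apply_le_norm_cfc (fun t : ℝ => (t - 1) + fL t) A ht hcont1 hA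
          _ = ‖P‖ := by rw [← hP]
      · refine le_trans ?_ (le_max_right ‖P‖ ‖Q‖)
        have : |t - 1| + fL t = fL t - (t - 1) := by
          rw [abs_of_nonpos (by linarith)]; ring
        rw [Real.norm_eq_abs, this, abs_of_nonneg (by linarith)]
        calc fL t - (t - 1) ≤ ‖fL t - (t - 1)‖ := le_abs_self _
          _ ≤ ‖cfc (fun t : ℝ => fL t - (t - 1)) A‖ :=
              norm_apply_le_norm_cfc (fun t : ℝ => fL t - (t - 1)) A ht hcont2 hA
          _ = ‖Q‖ := by rw [← hQ]
    · rw [hP]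
      refine norm_cfc_le (norm_nonneg _) fun t ht => ?_
      have h0 : 0 ≤ fL t := Real.sqrt_nonneg _
      calc ‖(t - 1) + fL t‖ ≤ |t - 1| + fL t := by
            rw [Real.norm_eq_abs]
            exact (abs_add_le _ _).trans (by rw [abs_of_nonneg h0])
        _ ≤ ‖|t - 1| + fL t‖ := le_abs_self _
        _ ≤ ‖cfc (fun t : ℝ => |t - 1| + fL t) A‖ :=
            norm_apply_le_norm_cfc (fun t : ℝ => |t - 1| + fL t) A ht hcont3 hA
        _ = ‖M + L‖ := by rw [← hML]
    · rw [hQ]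
      refine norm_cfc_le (norm_nonneg _) fun t ht => ?_
      have h0 : 0 ≤ fL t := Real.sqrt_nonneg _
      calc ‖fL t - (t - 1)‖ ≤ fL t + |t - 1| := by
            rw [Real.norm_eq_abs]
            exact (abs_sub _ _).trans (by rw [abs_of_nonneg h0])
        _ = |t - 1| + fL t := by ring
        _ ≤ ‖|t - 1| + fL t‖ := le_abs_self _
        _ ≤ ‖cfc (fun t : ℝ => |t - 1| + fL t) A‖ :=
            norm_apply_le_norm_cfc (fun t : ℝ => |t - 1| + fL t) A ht hcont3 hA
        _ = ‖M + L‖ := by rw [← hML]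
  -- commutation and algebraic identities
  have hLL : L * L = A * A - A := CFC.sqrt_mul_sqrt_self _ hpos
  have hAL : A * L = L * A := by
    have hcomm := cfc_commute_cfc (R := ℝ) (fun t : ℝ => t) fL A
    rw [cfc_id' ℝ A, ← hL] at hcomm
    exact hcomm
  -- pointwise formula for Ω²
  have hΩ2 : ∀ x y : H, Ω (Ω (e (x, y))) = e (-((A - 1) x), -((A - 1) y)) := by
    intro x y
    rw [hΩ x y, hΩ ((1 - A) x + L y) (-(L x) + (A - 1) y)]
    have eLL : ∀ v : H, L (L v) = A (A v) - A v := by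
      intro v
      have h := DFunLike.congr_fun hLL v
      simpa only [ContinuousLinearMap.mul_apply, ContinuousLinearMap.sub_apply] using h
    have eAL : ∀ v : H, A (L v) = L (A v) := by
      intro v
      have h := DFunLike.congr_fun hAL v
      simpa only [ContinuousLinearMap.mul_apply] using h
    have comp1 : (1 - A) ((1 - A) x + L y) + L (-(L x) + (A - 1) y) = -((A - 1) x) := by
      simp only [map_add, map_sub, map_neg, ContinuousLinearMap.sub_apply,
        ContinuousLinearMap.add_apply, ContinuousLinearMap.one_apply, eLL, eAL]
      abel
    have comp2 : -(L ((1 - A) x + L y)) + (A - 1) (-(L x) + (A - 1) y) = -((A - 1) y) := by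
      simp only [map_add, map_sub, map_neg, ContinuousLinearMap.sub_apply,
        ContinuousLinearMap.add_apply, ContinuousLinearMap.one_apply, eLL, eAL]
      abel
    rw [comp1, comp2]
  -- norms of elements of the ℓ²-sum
  have hne : ∀ a b : H, ‖e (a, b)‖ ^ 2 = ‖a‖ ^ 2 + ‖b‖ ^ 2 := fun a b => norm_e_sq a b
  have hz_decomp : ∀ z : WithLp 2 (H × H),
      z = e ((WithLp.equiv 2 (H × H) z).1, (WithLp.equiv 2 (H × H) z).2) := by
    intro z
    rw [he]
    exact ((WithLp.equiv 2 (H × H)).symm_apply_apply z).symm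
  constructor
  · -- ‖Ω‖ = ‖M + L‖
    rw [hnorm_eq]
    refine le_antisymm ?_ (max_le ?_ ?_)
    · -- upper bound
      refine ContinuousLinearMap.opNorm_le_bound Ω
        (le_trans (norm_nonneg P) (le_max_left _ _)) fun z => ?_
      set C := max ‖P‖ ‖Q‖ with hC
      have hC0 : 0 ≤ C := le_trans (norm_nonneg P) (le_max_left _ _)
      set x := (WithLp.equiv 2 (H × H) z).1 with hx
      set y := (WithLp.equiv 2 (H × H) z).2 with hy
      have hz : z = e (x, y) := hz_decomp z
      set c1 : H := (1 - A) x + L y with hc1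
      set c2 : H := -(L x) + (A - 1) y with hc2
      have hΩz : Ω z = e (c1, c2) := by rw [hz, hΩ x y]
      set a : H := Q (x + y) with ha
      set b : H := P (x - y) with hb
      have E1 : a - b = (2 : ℝ) • c1 := by
        simp only [ha, hb, hc1, hPdef, hQdef, map_add, map_sub,
          ContinuousLinearMap.add_apply, ContinuousLinearMap.sub_apply,
          ContinuousLinearMap.one_apply, two_smul]
        abel
      have E2 : a + b = (2 : ℝ) • (-c2) := by
        simp only [ha, hb, hc2, hPdef, hQdef, map_add, map_sub, neg_add, neg_neg,
          ContinuousLinearMap.add_apply, ContinuousLinearMap.sub_apply,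
          ContinuousLinearMap.one_apply, two_smul]
        abel
      have hpar1 : ‖a + b‖ * ‖a + b‖ + ‖a - b‖ * ‖a - b‖ =
          2 * (‖a‖ * ‖a‖ + ‖b‖ * ‖b‖) := by simpa only [sq] using parallelogram_law_with_norm ℂ a b
      have hEn1 : ‖a - b‖ = 2 * ‖c1‖ := by
        rw [E1, norm_smul]; simp
      have hEn2 : ‖a + b‖ = 2 * ‖c2‖ := by
        rw [E2, norm_smul, norm_neg]; simp
      have hpar2 : ‖x + y‖ * ‖x + y‖ + ‖x - y‖ * ‖x - y‖ =
          2 * (‖x‖ * ‖x‖ + ‖y‖ * ‖y‖) := by simpa only [sq] using parallelogram_law_with_norm ℂ x y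
      have hQa : ‖a‖ ≤ C * ‖x + y‖ :=
        le_trans (Q.le_opNorm _) (by gcongr; exact le_max_right _ _)
      have hPb : ‖b‖ ≤ C * ‖x - y‖ :=
        le_trans (P.le_opNorm _) (by gcongr; exact le_max_left _ _)
      have hQa2 : ‖a‖ * ‖a‖ ≤ C ^ 2 * (‖x + y‖ * ‖x + y‖) := by nlinarith [norm_nonneg a]
      have hPb2 : ‖b‖ * ‖b‖ ≤ C ^ 2 * (‖x - y‖ * ‖x - y‖) := by nlinarith [norm_nonneg b]
      have hzn : ‖z‖ ^ 2 = ‖x‖ ^ 2 + ‖y‖ ^ 2 := by rw [hz, hne]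
      have hΩzn : ‖Ω z‖ ^ 2 = ‖c1‖ ^ 2 + ‖c2‖ ^ 2 := by rw [hΩz, hne]
      have hsq : ‖Ω z‖ ^ 2 ≤ (C * ‖z‖) ^ 2 := by
        have h1 : (C * ‖z‖) ^ 2 = C ^ 2 * ‖z‖ ^ 2 := by ring
        rw [hΩzn, h1, hzn]
        nlinarith [hpar1, hpar2, hEn1, hEn2, hQa2, hPb2, norm_nonneg c1, norm_nonneg c2]
      exact le_of_pow_le_pow_left₀ two_ne_zero (by positivity) hsq
    · -- ‖P‖ ≤ ‖Ω‖
      refine ContinuousLinearMap.opNorm_le_bound P (norm_nonneg Ω) fun w => ?_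
      have hΩw : Ω (e (w, -w)) = e (-(P w), -(P w)) := by
        rw [hΩ w (-w)]
        have h1 : (1 - A) w + L (-w) = -(P w) := by
          simp only [hPdef, map_neg, ContinuousLinearMap.add_apply,
            ContinuousLinearMap.sub_apply, ContinuousLinearMap.one_apply, neg_add]
          abel
        have h2 : -(L w) + (A - 1) (-w) = -(P w) := by
          simp only [hPdef, map_neg, ContinuousLinearMap.add_apply,
            ContinuousLinearMap.sub_apply, ContinuousLinearMap.one_apply, neg_add]
          abel
        rw [h1, h2]
      have hle := Ω.le_opNorm (e (w, -w))
      have hn1 : ‖Ω (e (w, -w))‖ ^ 2 = 2 * ‖P w‖ ^ 2 := by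
        rw [hΩw, hne, norm_neg]; ring
      have hn2 : ‖e (w, -w)‖ ^ 2 = 2 * ‖w‖ ^ 2 := by rw [hne, norm_neg]; ring
      have hsq : ‖P w‖ ^ 2 ≤ (‖Ω‖ * ‖w‖) ^ 2 := by
        have h2 : ‖Ω (e (w, -w))‖ ^ 2 ≤ (‖Ω‖ * ‖e (w, -w)‖) ^ 2 :=
          pow_le_pow_left₀ (norm_nonneg _) hle 2
        have h3 : (‖Ω‖ * ‖e (w, -w)‖) ^ 2 = 2 * (‖Ω‖ * ‖w‖) ^ 2 := by
          rw [mul_pow, hn2]; ring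
        linarith [hn1, h2, h3]
      exact le_of_pow_le_pow_left₀ two_ne_zero (by positivity) hsq
    · -- ‖Q‖ ≤ ‖Ω‖
      refine ContinuousLinearMap.opNorm_le_bound Q (norm_nonneg Ω) fun w => ?_
      have hΩw : Ω (e (w, w)) = e (Q w, -(Q w)) := by
        rw [hΩ w w]
        have h1 : (1 - A) w + L w = Q w := by
          simp only [hQdef, ContinuousLinearMap.sub_apply,
            ContinuousLinearMap.one_apply]
          abel
        have h2 : -(L w) + (A - 1) w = -(Q w) := by
          simp only [hQdef, ContinuousLinearMap.sub_apply,
            ContinuousLinearMap.one_apply, neg_sub]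
          abel
        rw [h1, h2]
      have hle := Ω.le_opNorm (e (w, w))
      have hn1 : ‖Ω (e (w, w))‖ ^ 2 = 2 * ‖Q w‖ ^ 2 := by
        rw [hΩw, hne, norm_neg]; ring
      have hn2 : ‖e (w, w)‖ ^ 2 = 2 * ‖w‖ ^ 2 := by rw [hne]; ring
      have hsq : ‖Q w‖ ^ 2 ≤ (‖Ω‖ * ‖w‖) ^ 2 := by
        have h2 : ‖Ω (e (w, w))‖ ^ 2 ≤ (‖Ω‖ * ‖e (w, w)‖) ^ 2 :=
          pow_le_pow_left₀ (norm_nonneg _) hle 2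
        have h3 : (‖Ω‖ * ‖e (w, w)‖) ^ 2 = 2 * (‖Ω‖ * ‖w‖) ^ 2 := by
          rw [mul_pow, hn2]; ring
        linarith [hn1, h2, h3]
      exact le_of_pow_le_pow_left₀ two_ne_zero (by positivity) hsq
  · -- ‖Ω * Ω‖ = ‖A - 1‖
    refine le_antisymm ?_ ?_
    · refine ContinuousLinearMap.opNorm_le_bound _ (norm_nonneg (A - 1)) fun z => ?_
      set x := (WithLp.equiv 2 (H × H) z).1 with hx
      set y := (WithLp.equiv 2 (H × H) z).2 with hy
      have hz : z = e (x, y) := hz_decomp z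
      have happ : (Ω * Ω) z = e (-((A - 1) x), -((A - 1) y)) := by
        rw [ContinuousLinearMap.mul_apply, hz, hΩ2 x y]
      have hn : ‖(Ω * Ω) z‖ ^ 2 = ‖(A - 1) x‖ ^ 2 + ‖(A - 1) y‖ ^ 2 := by
        rw [happ, hne, norm_neg, norm_neg]
      have hzn : ‖z‖ ^ 2 = ‖x‖ ^ 2 + ‖y‖ ^ 2 := by rw [hz, hne]
      have hx1 : ‖(A - 1) x‖ ≤ ‖A - 1‖ * ‖x‖ := (A - 1).le_opNorm x
      have hy1 : ‖(A - 1) y‖ ≤ ‖A - 1‖ * ‖y‖ := (A - 1).le_opNorm y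
      have hsq : ‖(Ω * Ω) z‖ ^ 2 ≤ (‖A - 1‖ * ‖z‖) ^ 2 := by
        have h1 : (‖A - 1‖ * ‖z‖) ^ 2 = ‖A - 1‖ ^ 2 * ‖z‖ ^ 2 := by ring
        rw [hn, h1, hzn]
        have hx2 : ‖(A - 1) x‖ ^ 2 ≤ (‖A - 1‖ * ‖x‖) ^ 2 :=
          pow_le_pow_left₀ (norm_nonneg _) hx1 2
        have hy2 : ‖(A - 1) y‖ ^ 2 ≤ (‖A - 1‖ * ‖y‖) ^ 2 :=
          pow_le_pow_left₀ (norm_nonneg _) hy1 2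
        have e1 : (‖A - 1‖ * ‖x‖) ^ 2 = ‖A - 1‖ ^ 2 * ‖x‖ ^ 2 := mul_pow _ _ _
        have e2 : (‖A - 1‖ * ‖y‖) ^ 2 = ‖A - 1‖ ^ 2 * ‖y‖ ^ 2 := mul_pow _ _ _
        nlinarith [hx2, hy2]
      exact le_of_pow_le_pow_left₀ two_ne_zero (by positivity) hsq
    · refine ContinuousLinearMap.opNorm_le_bound _ (norm_nonneg (Ω * Ω)) fun w => ?_
      have happ : (Ω * Ω) (e (w, 0)) = e (-((A - 1) w), -((A - 1) (0 : H))) := by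
        rw [ContinuousLinearMap.mul_apply, hΩ2 w 0]
      have hle := (Ω * Ω).le_opNorm (e (w, 0))
      have hn1 : ‖(Ω * Ω) (e (w, 0))‖ ^ 2 = ‖(A - 1) w‖ ^ 2 := by
        rw [happ, hne, norm_neg, norm_neg, map_zero, norm_zero]; ring
      have hn2 : ‖e (w, (0 : H))‖ ^ 2 = ‖w‖ ^ 2 := by rw [hne, norm_zero]; ring
      have hsq : ‖(A - 1) w‖ ^ 2 ≤ (‖Ω * Ω‖ * ‖w‖) ^ 2 := by
        have h2 : ‖(Ω * Ω) (e (w, 0))‖ ^ 2 ≤ (‖Ω * Ω‖ * ‖e (w, (0 : H))‖) ^ 2 :=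
          pow_le_pow_left₀ (norm_nonneg _) hle 2
        have h3 : (‖Ω * Ω‖ * ‖e (w, (0 : H))‖) ^ 2 = (‖Ω * Ω‖ * ‖w‖) ^ 2 := by
          rw [mul_pow, hn2, mul_pow]
        linarith [hn1, h2, h3]
      exact le_of_pow_le_pow_left₀ two_ne_zero (by positivity) hsq

end
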